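/- arXiv:2208.05671 — 5 statements merged into one kernel-verified Lean document; each statement's English description precedes it below -/
import Mathlib

section
/- Let 1 < p < q be real numbers and let g : (0,∞) → (0,∞) satisfy condition (g). Then for all ε > 0 and all a, b > 0 one has g(a)·b ≤ ε·a·g(a) + max(ε^{1−p}, ε^{1−q})·b·g(b). -/
/-- Young-type inequality (2.1) of the paper for a function satisfying condition (g). -/
theorem stmt_2 (p q : ℝ) (hp : 1 < p) (hpq : p < q)
    (g : ℝ → ℝ) (hgpos : ∀ v : ℝ, 0 < v → 0 < g v)
    (hg : ∀ v w : ℝ, 0 < v → v ≤ w →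
      (w / v) ^ (p - 1) ≤ g w / g v ∧ g w / g v ≤ (w / v) ^ (q - 1)) :
    ∀ ε a b : ℝ, 0 < ε → 0 < a → 0 < b →
      g a * b ≤ ε * a * g a + max (ε ^ (1 - p)) (ε ^ (1 - q)) * b * g b := by
  intro ε a b hε ha hb
  have hga := hgpos a ha
  have hgb := hgpos b hb
  have hMpos : 0 < max (ε ^ (1 - p)) (ε ^ (1 - q)) :=
    lt_max_of_lt_left (Real.rpow_pos_of_pos hε _)
  rcases le_or_gt b (ε * a) with h | h
  · have h1 : g a * b ≤ ε * a * g a := by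
      rw [mul_comm (g a) b]
      exact mul_le_mul_of_nonneg_right h hga.le
    nlinarith [mul_pos (mul_pos hMpos hb) hgb]
  · -- b > ε a; show g a ≤ M * g b
    have key : g a ≤ max (ε ^ (1 - p)) (ε ^ (1 - q)) * g b := by
      rcases le_or_gt a b with hab | hab
      · -- use lower bound: g b / g a ≥ (b/a)^(p-1) ≥ ε^(p-1)
        have hlow := (hg a b ha hab).1
        have hεba : ε ≤ b / a := by
          rw [le_div_iff₀ ha]; linarith [mul_comm ε a]
        have h2 : ε ^ (p - 1) ≤ (b / a) ^ (p - 1) :=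
          Real.rpow_le_rpow hε.le hεba (by linarith)
        have h3 : ε ^ (p - 1) ≤ g b / g a := le_trans h2 hlow
        have h4 : g a * ε ^ (p - 1) ≤ g b := by
          rw [le_div_iff₀ hga] at h3
          linarith
        have h5 : g a ≤ ε ^ (1 - p) * g b := by
          have hep : (0:ℝ) < ε ^ (p - 1) := Real.rpow_pos_of_pos hε _
          have : ε ^ (1 - p) = (ε ^ (p - 1))⁻¹ := by
            rw [← Real.rpow_neg hε.le]; ring_nf
          rw [this, ← div_eq_inv_mul, le_div_iff₀ hep]
          linarith
        calc g a ≤ ε ^ (1 - p) * g b := h5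
          _ ≤ max (ε ^ (1 - p)) (ε ^ (1 - q)) * g b :=
            mul_le_mul_of_nonneg_right (le_max_left _ _) hgb.le
      · -- b < a : use upper bound g a / g b ≤ (a/b)^(q-1) ≤ ε^(1-q)
        have hup := (hg b a hb hab.le).2
        have hεab : a / b ≤ ε⁻¹ := by
          rw [div_le_iff₀ hb, show ε⁻¹ * b = b / ε from inv_mul_eq_div _ _,
            le_div_iff₀ hε]
          nlinarith
        have h2 : (a / b) ^ (q - 1) ≤ (ε⁻¹) ^ (q - 1) :=
          Real.rpow_le_rpow (by positivity) hεab (by linarith)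
        have h3 : (ε⁻¹) ^ (q - 1) = ε ^ (1 - q) := by
          rw [Real.inv_rpow hε.le, ← Real.rpow_neg hε.le]
          ring_nf
        have h4 : g a / g b ≤ ε ^ (1 - q) := by
          rw [← h3]; exact le_trans hup h2
        have h5 : g a ≤ ε ^ (1 - q) * g b := by
          rw [div_le_iff₀ hgb] at h4; linarith
        calc g a ≤ ε ^ (1 - q) * g b := h5
          _ ≤ max (ε ^ (1 - p)) (ε ^ (1 - q)) * g b :=
            mul_le_mul_of_nonneg_right (le_max_right _ _) hgb.le
    have h6 : g a * b ≤ max (ε ^ (1 - p)) (ε ^ (1 - q)) * b * g b := by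
      calc g a * b ≤ (max (ε ^ (1 - p)) (ε ^ (1 - q)) * g b) * b :=
            mul_le_mul_of_nonneg_right key hb.le
        _ = max (ε ^ (1 - p)) (ε ^ (1 - q)) * b * g b := by ring
    nlinarith [mul_pos (mul_pos hε ha) hga]
end

section
/- Let n ≥ 1 and let h : [0,∞) → [0,∞) be continuous and non-decreasing with h(0) = 0 and h(v) > 0 for every v > 0. Define H(v) = ∫₀^v h(s) ds for v ≥ 0, and define the vector field F on ℝⁿ by F(ξ) = H(‖ξ‖)·ξ/‖ξ‖² for ξ ≠ 0 and F(0) = 0. Then for all ξ, η ∈ ℝⁿ with ξ ≠ η one has ⟨F(ξ) − F(η), ξ − η⟩ > 0, where ⟨·,·⟩ is the Euclidean inner product. -/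
open scoped RealInnerProductSpace

/-- Strict monotonicity of the operator `ξ ↦ H(|ξ|) ξ / |ξ|²` from Section 3 of the paper. -/
theorem stmt_3 (n : ℕ) (hn : 1 ≤ n)
    (h : ℝ → ℝ)
    (hcont : ContinuousOn h (Set.Ici 0))
    (hmono : MonotoneOn h (Set.Ici 0))
    (h0 : h 0 = 0) (hpos : ∀ v : ℝ, 0 < v → 0 < h v)
    (H : ℝ → ℝ) (hH : ∀ v : ℝ, 0 ≤ v → H v = ∫ s in (0:ℝ)..v, h s)
    (F : EuclideanSpace ℝ (Fin n) → EuclideanSpace ℝ (Fin n))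
    (hF0 : F 0 = 0)
    (hF : ∀ ξ : EuclideanSpace ℝ (Fin n), ξ ≠ 0 → F ξ = (H ‖ξ‖ / ‖ξ‖ ^ 2) • ξ) :
    ∀ ξ η : EuclideanSpace ℝ (Fin n), ξ ≠ η → 0 < ⟪F ξ - F η, ξ - η⟫ := by
  -- h is nonnegative on [0,∞)
  have hh0 : ∀ v : ℝ, 0 ≤ v → 0 ≤ h v := fun v hv => h0 ▸ hmono Set.self_mem_Ici hv hv
  -- integrability
  have hInt : ∀ a b : ℝ, 0 ≤ a → 0 ≤ b → IntervalIntegrable h MeasureTheory.volume a b := by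
    intro a b ha hb
    apply ContinuousOn.intervalIntegrable
    apply hcont.mono
    intro x hx
    exact le_trans (le_min ha hb) hx.1
  -- H is nonnegative
  have hHnn : ∀ v : ℝ, 0 ≤ v → 0 ≤ H v := by
    intro v hv
    rw [hH v hv]
    exact intervalIntegral.integral_nonneg hv (fun s hs => hh0 s hs.1)
  -- H is positive on positives
  have hHpos : ∀ v : ℝ, 0 < v → 0 < H v := by
    intro v hv
    have h2 : 0 < v / 2 := by linarith
    rw [hH v hv.le]
    rw [← intervalIntegral.integral_add_adjacent_intervals (hInt 0 (v/2) le_rfl h2.le)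
      (hInt (v/2) v h2.le hv.le)]
    have h1 : 0 ≤ ∫ s in (0:ℝ)..v/2, h s :=
      intervalIntegral.integral_nonneg h2.le (fun s hs => hh0 s hs.1)
    have h3 : (v - v/2) * h (v/2) ≤ ∫ s in (v/2)..v, h s := by
      have := intervalIntegral.integral_mono_on (by linarith : v/2 ≤ v)
        intervalIntegrable_const (hInt (v/2) v h2.le hv.le)
        (fun s hs => hmono (Set.mem_Ici.2 h2.le) (Set.mem_Ici.2 (le_trans h2.le hs.1)) hs.1)
      simpa using this
    have h4 : 0 < (v - v/2) * h (v/2) := by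
      have := hpos (v/2) h2
      nlinarith
    linarith
  -- key strict inequality : H a < a * h a
  have hkey : ∀ a : ℝ, 0 < a → H a < a * h a := by
    intro a ha
    have hha : 0 < h a := hpos a ha
    have hc : ContinuousWithinAt h (Set.Ici 0) 0 := hcont 0 Set.self_mem_Ici
    rw [Metric.continuousWithinAt_iff] at hc
    obtain ⟨δ, hδ, hδ'⟩ := hc (h a) hha
    set d := min (δ/2) (a/2) with hdef
    have hd0 : 0 < d := lt_min (by linarith) (by linarith)
    have hda : d < a := lt_of_le_of_lt (min_le_right _ _) (by linarith)
    have hdd : h d < h a := by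
      have hdist : dist d 0 < δ := by
        rw [Real.dist_eq, sub_zero, abs_of_pos hd0]
        exact lt_of_le_of_lt (min_le_left _ _) (by linarith)
      have := hδ' (Set.mem_Ici.2 hd0.le) hdist
      rw [Real.dist_eq, h0, sub_zero] at this
      exact lt_of_le_of_lt (le_abs_self _) this
    rw [hH a ha.le]
    rw [← intervalIntegral.integral_add_adjacent_intervals (hInt 0 d le_rfl hd0.le)
      (hInt d a hd0.le ha.le)]
    have h1 : ∫ s in (0:ℝ)..d, h s ≤ d * h d := by
      have := intervalIntegral.integral_mono_on hd0.le
        (hInt 0 d le_rfl hd0.le) intervalIntegrable_const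
        (fun s hs => hmono (Set.mem_Ici.2 hs.1) (Set.mem_Ici.2 hd0.le) hs.2)
      simpa using this
    have h2 : ∫ s in d..a, h s ≤ (a - d) * h a := by
      have := intervalIntegral.integral_mono_on hda.le
        (hInt d a hd0.le ha.le) intervalIntegrable_const
        (fun s hs => hmono (Set.mem_Ici.2 (le_trans hd0.le hs.1)) (Set.mem_Ici.2 ha.le) hs.2)
      simpa using this
    nlinarith [mul_lt_mul_of_pos_left hdd hd0]
  -- strict monotonicity of H a / a
  have hmain : ∀ a b : ℝ, 0 < a → a < b → H a * b < H b * a := by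
    intro a b ha hab
    have hb : 0 < b := ha.trans hab
    have hsplit : H b = H a + ∫ s in a..b, h s := by
      rw [hH a ha.le, hH b hb.le,
        ← intervalIntegral.integral_add_adjacent_intervals (hInt 0 a le_rfl ha.le)
          (hInt a b ha.le hb.le)]
    have h2 : (b - a) * h a ≤ ∫ s in a..b, h s := by
      have := intervalIntegral.integral_mono_on hab.le
        intervalIntegrable_const (hInt a b ha.le hb.le)
        (fun s hs => hmono (Set.mem_Ici.2 ha.le) (Set.mem_Ici.2 (le_trans ha.le hs.1)) hs.1)
      simpa using this
    have h3 : H a < a * h a := hkey a ha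
    nlinarith [mul_lt_mul_of_pos_right h3 (sub_pos.2 hab),
      mul_le_mul_of_nonneg_left h2 ha.le]
  -- the main case with both vectors nonzero and distinct norms
  have hcase : ∀ ξ η : EuclideanSpace ℝ (Fin n), ξ ≠ 0 → η ≠ 0 → ‖ξ‖ < ‖η‖ →
      0 < ⟪F ξ - F η, ξ - η⟫ := by
    intro ξ η hξ hη hab
    have ha : (0:ℝ) < ‖ξ‖ := norm_pos_iff.2 hξ
    have hb : (0:ℝ) < ‖η‖ := norm_pos_iff.2 hη
    set a := ‖ξ‖ with hadef
    set b := ‖η‖ with hbdef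
    have httab : ⟪ξ, η⟫ ≤ a * b := real_inner_le_norm ξ η
    have hexp : ⟪F ξ - F η, ξ - η⟫
        = (H a / a^2) * a^2 - (H a / a^2 + H b / b^2) * ⟪ξ, η⟫ + (H b / b^2) * b^2 := by
      rw [hF ξ hξ, hF η hη]
      simp only [inner_sub_left, inner_sub_right, real_inner_smul_left,
        real_inner_self_eq_norm_sq, real_inner_comm η ξ, ← hadef, ← hbdef]
      ring
    rw [hexp, div_mul_cancel₀ _ (by positivity : a^2 ≠ 0),
      div_mul_cancel₀ _ (by positivity : b^2 ≠ 0)]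
    set t := ⟪ξ, η⟫
    have hkey' : H a * b < H b * a := hmain a b ha hab
    have hHa : 0 ≤ H a := hHnn a ha.le
    have hHb : 0 ≤ H b := hHnn b hb.le
    have e : H a - (H a / a^2 + H b / b^2) * t + H b
        = ((H a + H b) * (a^2 * b^2) - (H a * b^2 + H b * a^2) * t) / (a^2 * b^2) := by
      field_simp
      ring
    rw [e]
    apply div_pos _ (by positivity)
    have hc : 0 ≤ H a * b^2 + H b * a^2 := by positivity
    have h1 : (H a * b^2 + H b * a^2) * t ≤ (H a * b^2 + H b * a^2) * (a * b) :=
      mul_le_mul_of_nonneg_left httab hc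
    have h2 : (H a * b^2 + H b * a^2) * (a * b) < (H a + H b) * (a^2 * b^2) := by
      nlinarith [mul_pos (mul_pos (mul_pos ha hb) (sub_pos.2 hab)) (sub_pos.2 hkey')]
    linarith
  intro ξ η hne
  by_cases hξ : ξ = 0
  · subst hξ
    have hη : η ≠ 0 := fun hc => hne hc.symm
    have hb : (0:ℝ) < ‖η‖ := norm_pos_iff.2 hη
    rw [hF0, hF η hη]
    simp only [zero_sub, inner_neg_neg, real_inner_smul_left, real_inner_self_eq_norm_sq]
    rw [div_mul_cancel₀ _ (by positivity : ‖η‖^2 ≠ 0)]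
    exact hHpos _ hb
  · by_cases hη : η = 0
    · subst hη
      have ha : (0:ℝ) < ‖ξ‖ := norm_pos_iff.2 hξ
      rw [hF0, hF ξ hξ]
      simp only [sub_zero, real_inner_smul_left, real_inner_self_eq_norm_sq]
      rw [div_mul_cancel₀ _ (by positivity : ‖ξ‖^2 ≠ 0)]
      exact hHpos _ ha
    · rcases lt_trichotomy ‖ξ‖ ‖η‖ with hab | hab | hab
      · exact hcase ξ η hξ hη hab
      · -- equal norms
        have ha : (0:ℝ) < ‖ξ‖ := norm_pos_iff.2 hξ
        have hsub : ξ - η ≠ 0 := sub_ne_zero.2 hne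
        have : F ξ - F η = (H ‖ξ‖ / ‖ξ‖^2) • (ξ - η) := by
          rw [hF ξ hξ, hF η hη, ← hab, smul_sub]
        rw [this, real_inner_smul_left, real_inner_self_eq_norm_sq]
        have h1 : 0 < H ‖ξ‖ / ‖ξ‖^2 := div_pos (hHpos _ ha) (by positivity)
        have h2 : 0 < ‖ξ - η‖^2 := pow_pos (norm_pos_iff.2 hsub) 2
        exact mul_pos h1 h2
      · have := hcase η ξ hη hξ hab
        rw [← neg_sub (F ξ) (F η), ← neg_sub ξ η, inner_neg_neg] at this
        exact this
end

section
/- Let 1 < p < q and t > 0 be real numbers with 1/(t+1) < (p−1)/q, and set δ = t/(t+1). Let ḡ : (0,∞) → (0,∞) be differentiable on (0,∞) and satisfy (p−1)·ḡ(v) ≤ v·ḡ′(v) ≤ (q−1)·ḡ(v) for every v > 0. Define Ḡ(v) = ∫₀^v ḡ(s) ds for v > 0 (the integral is finite since ḡ(s) ≤ ḡ(v)(s/v)^{p−1} for 0 < s ≤ v). Then the function Q(v) = [Ḡ(v)]^δ is convex on (0,∞). -/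
open Set MeasureTheory intervalIntegral

/-- Convexity of `Q = Ḡ^δ`, `δ = t/(t+1)`, from the beginning of Section 3.3 of the paper. -/
theorem stmt_6 (p q t : ℝ) (hp : 1 < p) (hpq : p < q) (ht : 0 < t)
    (htpq : 1 / (t + 1) < (p - 1) / q)
    (g : ℝ → ℝ) (hgpos : ∀ v : ℝ, 0 < v → 0 < g v)
    (hgdiff : ∀ v : ℝ, 0 < v → DifferentiableAt ℝ g v)
    (hg : ∀ v : ℝ, 0 < v →
      (p - 1) * g v ≤ v * deriv g v ∧ v * deriv g v ≤ (q - 1) * g v)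
    (G : ℝ → ℝ) (hG : ∀ v : ℝ, 0 < v → G v = ∫ s in (0:ℝ)..v, g s) :
    ConvexOn ℝ (Set.Ioi 0) (fun v => G v ^ (t / (t + 1))) := by
  set δ : ℝ := t / (t + 1) with hδdef
  have ht1 : (0:ℝ) < t + 1 := by linarith
  have hδ0 : 0 < δ := div_pos ht ht1
  have hδ1 : δ < 1 := (div_lt_one ht1).mpr (by linarith)
  have hq0 : (0:ℝ) < q := by linarith
  have hgcont : ContinuousOn g (Set.Ioi 0) :=
    fun v hv => (hgdiff v hv).continuousAt.continuousWithinAt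
  -- derivative of the ratio function
  have hratio : ∀ c : ℝ, ∀ v : ℝ, 0 < v →
      HasDerivAt (fun s => g s * s ^ (-c)) (v ^ (-c - 1) * (v * deriv g v - c * g v)) v := by
    intro c v hv
    have h1 : HasDerivAt (fun s : ℝ => s ^ (-c)) (-c * v ^ (-c - 1)) v :=
      Real.hasDerivAt_rpow_const (Or.inl hv.ne')
    have h2 := ((hgdiff v hv).hasDerivAt).mul h1
    have hvv : v ^ (-c) = v ^ (-c - 1) * v := by
      rw [← Real.rpow_add_one hv.ne' (-c - 1)]; ring_nf
    have h3 : deriv g v * v ^ (-c) + g v * (-c * v ^ (-c - 1))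
        = v ^ (-c - 1) * (v * deriv g v - c * g v) := by
      rw [hvv]; ring
    rw [h3] at h2; exact h2
  -- monotone ratio for exponent p-1
  have hmono : MonotoneOn (fun s => g s * s ^ (-(p - 1))) (Set.Ioi 0) := by
    refine monotoneOn_of_deriv_nonneg (convex_Ioi 0) ?_ ?_ ?_
    · intro v hv; exact (hratio (p - 1) v hv).continuousAt.continuousWithinAt
    · rw [interior_Ioi]; intro v hv
      exact (hratio (p - 1) v hv).differentiableAt.differentiableWithinAt
    · rw [interior_Ioi]; intro v hv
      rw [(hratio (p - 1) v hv).deriv]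
      have h1 := (hg v hv).1
      have h2 : (0:ℝ) ≤ v ^ (-(p-1) - 1) := (Real.rpow_pos_of_pos hv _).le
      nlinarith [mul_nonneg h2 (sub_nonneg.mpr h1)]
  -- antitone ratio for exponent q-1
  have hanti : AntitoneOn (fun s => g s * s ^ (-(q - 1))) (Set.Ioi 0) := by
    refine antitoneOn_of_deriv_nonpos (convex_Ioi 0) ?_ ?_ ?_
    · intro v hv; exact (hratio (q - 1) v hv).continuousAt.continuousWithinAt
    · rw [interior_Ioi]; intro v hv
      exact (hratio (q - 1) v hv).differentiableAt.differentiableWithinAt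
    · rw [interior_Ioi]; intro v hv
      rw [(hratio (q - 1) v hv).deriv]
      have h1 := (hg v hv).2
      have h2 : (0:ℝ) ≤ v ^ (-(q-1) - 1) := (Real.rpow_pos_of_pos hv _).le
      nlinarith [mul_nonneg h2 (sub_nonneg.mpr h1)]
  -- upper bound g s ≤ C s^(p-1) on Ioc 0 v
  have hub : ∀ v : ℝ, 0 < v → ∀ s ∈ Set.Ioc (0:ℝ) v,
      g s ≤ (g v * v ^ (-(p - 1))) * s ^ (p - 1) := by
    intro v hv s hs
    have h1 := hmono hs.1 (show v ∈ Set.Ioi (0:ℝ) from hv) hs.2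
    have hs0 : (0:ℝ) < s := hs.1
    have hcan : s ^ (-(p-1)) * s ^ (p-1) = 1 := by
      rw [← Real.rpow_add hs0]; simp
    have hsp : (0:ℝ) < s ^ (p-1) := Real.rpow_pos_of_pos hs0 _
    calc g s = (g s * s ^ (-(p-1))) * s ^ (p-1) := by
              rw [mul_assoc, hcan, mul_one]
      _ ≤ (g v * v ^ (-(p-1))) * s ^ (p-1) := by
              exact mul_le_mul_of_nonneg_right h1 hsp.le
  -- lower bound C' s^(q-1) ≤ g s on Ioc 0 v
  have hlb : ∀ v : ℝ, 0 < v → ∀ s ∈ Set.Ioc (0:ℝ) v,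
      (g v * v ^ (-(q - 1))) * s ^ (q - 1) ≤ g s := by
    intro v hv s hs
    have h1 := hanti hs.1 (show v ∈ Set.Ioi (0:ℝ) from hv) hs.2
    have hs0 : (0:ℝ) < s := hs.1
    have hcan : s ^ (-(q-1)) * s ^ (q-1) = 1 := by
      rw [← Real.rpow_add hs0]; simp
    have hsp : (0:ℝ) < s ^ (q-1) := Real.rpow_pos_of_pos hs0 _
    calc (g v * v ^ (-(q-1))) * s ^ (q-1) ≤ (g s * s ^ (-(q-1))) * s ^ (q-1) :=
          mul_le_mul_of_nonneg_right h1 hsp.le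
      _ = g s := by rw [mul_assoc, hcan, mul_one]
  -- integrability
  have hint : ∀ v : ℝ, 0 < v → IntervalIntegrable g volume 0 v := by
    intro v hv
    rw [intervalIntegrable_iff, Set.uIoc_of_le hv.le]
    have hB : IntegrableOn (fun s => (g v * v ^ (-(p-1))) * s ^ (p-1)) (Set.Ioc 0 v) := by
      have := (intervalIntegral.intervalIntegrable_rpow' (a := 0) (b := v)
        (show (-1:ℝ) < p - 1 by linarith)).const_mul (g v * v ^ (-(p-1)))
      rwa [intervalIntegrable_iff, Set.uIoc_of_le hv.le] at this
    refine hB.mono' ?_ ?_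
    · exact (hgcont.mono Set.Ioc_subset_Ioi_self).aestronglyMeasurable measurableSet_Ioc
    · rw [ae_restrict_iff' measurableSet_Ioc]
      filter_upwards with s hs
      rw [Real.norm_eq_abs, abs_of_pos (hgpos s hs.1)]
      exact hub v hv s hs
  -- lower bound for G
  have hGlb : ∀ v : ℝ, 0 < v → v * g v / q ≤ G v := by
    intro v hv
    rw [hG v hv, intervalIntegral.integral_of_le hv.le]
    have hBint : IntegrableOn (fun s => (g v * v ^ (-(q-1))) * s ^ (q-1)) (Set.Ioc 0 v) := by
      have := (intervalIntegral.intervalIntegrable_rpow' (a := 0) (b := v)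
        (show (-1:ℝ) < q - 1 by linarith)).const_mul (g v * v ^ (-(q-1)))
      rwa [intervalIntegrable_iff, Set.uIoc_of_le hv.le] at this
    have hgint : IntegrableOn g (Set.Ioc 0 v) := by
      have := hint v hv
      rwa [intervalIntegrable_iff, Set.uIoc_of_le hv.le] at this
    have hmono' := MeasureTheory.setIntegral_mono_on hBint hgint measurableSet_Ioc (hlb v hv)
    have hval : ∫ s in Set.Ioc (0:ℝ) v, (g v * v ^ (-(q-1))) * s ^ (q-1) = v * g v / q := by
      rw [← intervalIntegral.integral_of_le hv.le, intervalIntegral.integral_const_mul,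
        integral_rpow (Or.inl (show (-1:ℝ) < q - 1 by linarith))]
      have h0 : (0:ℝ) ^ (q - 1 + 1) = 0 := by
        rw [show q - 1 + 1 = q by ring]; exact Real.zero_rpow hq0.ne'
      rw [h0, show q - 1 + 1 = q by ring]
      have hvq : v ^ (-(q-1)) * v ^ q = v := by
        rw [← Real.rpow_add hv, show -(q-1) + q = 1 by ring, Real.rpow_one]
      calc g v * v ^ (-(q-1)) * ((v ^ q - 0) / q)
          = v ^ (-(q-1)) * v ^ q * g v / q := by ring
        _ = v * g v / q := by rw [hvq]
    rw [← hval]; exact hmono'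
  have hGpos : ∀ v : ℝ, 0 < v → 0 < G v := by
    intro v hv
    have : (0:ℝ) < v * g v / q := by
      have := hgpos v hv; positivity
    linarith [hGlb v hv]
  -- FTC : derivative of G
  have hGderiv : ∀ v : ℝ, 0 < v → HasDerivAt G (g v) v := by
    intro v hv
    have hmeas : StronglyMeasurableAtFilter g (nhds v) :=
      ⟨Set.Ioi 0, isOpen_Ioi.mem_nhds hv, hgcont.aestronglyMeasurable measurableSet_Ioi⟩
    have h1 : HasDerivAt (fun u => ∫ s in (0:ℝ)..u, g s) (g v) v :=
      intervalIntegral.integral_hasDerivAt_right (hint v hv) hmeas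
        (hgdiff v hv).continuousAt
    refine h1.congr_of_eventuallyEq ?_
    filter_upwards [isOpen_Ioi.mem_nhds hv] with u hu
    exact hG u hu
  -- first derivative of Q
  have hQ' : ∀ v : ℝ, 0 < v →
      HasDerivAt (fun u => G u ^ δ) (g v * δ * G v ^ (δ - 1)) v := by
    intro v hv
    exact (hGderiv v hv).rpow_const (Or.inl (hGpos v hv).ne')
  set F' : ℝ → ℝ := fun u => g u * δ * G u ^ (δ - 1) with hF'def
  -- second derivative
  have hF'deriv : ∀ v : ℝ, 0 < v →
      HasDerivAt F' (deriv g v * δ * G v ^ (δ - 1)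
        + g v * δ * (g v * (δ - 1) * G v ^ (δ - 1 - 1))) v := by
    intro v hv
    have h1 : HasDerivAt (fun u => g u * δ) (deriv g v * δ) v :=
      ((hgdiff v hv).hasDerivAt).mul_const δ
    have h2 : HasDerivAt (fun u => G u ^ (δ - 1)) (g v * (δ - 1) * G v ^ (δ - 1 - 1)) v :=
      (hGderiv v hv).rpow_const (Or.inl (hGpos v hv).ne')
    exact h1.mul h2
  -- nonnegativity of second derivative value
  have hS : ∀ v : ℝ, 0 < v →
      0 ≤ deriv g v * δ * G v ^ (δ - 1)
        + g v * δ * (g v * (δ - 1) * G v ^ (δ - 1 - 1)) := by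
    intro v hv
    have hA : 0 < G v := hGpos v hv
    have hB : 0 < g v := hgpos v hv
    have hD : (p - 1) * g v / v ≤ deriv g v := by
      have := (hg v hv).1
      rw [div_le_iff₀ hv]
      nlinarith
    have hDpos : 0 < deriv g v :=
      lt_of_lt_of_le (div_pos (mul_pos (by linarith) hB) hv) hD
    have hApow : (0:ℝ) < G v ^ (δ - 1 - 1) := Real.rpow_pos_of_pos hA _
    have hexp : G v ^ (δ - 1) = G v ^ (δ - 1 - 1) * G v := by
      rw [← Real.rpow_add_one hA.ne' (δ - 1 - 1)]; ring_nf
    rw [hexp]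
    have hkey : g v ^ 2 * (1 - δ) ≤ deriv g v * G v := by
      have h1 : (p - 1) * g v / v * (v * g v / q) ≤ deriv g v * G v := by
        apply mul_le_mul hD (hGlb v hv) (by positivity) hDpos.le
      have h2 : (p - 1) * g v / v * (v * g v / q) = (p - 1) / q * g v ^ 2 := by
        field_simp
      have h3 : 1 - δ = 1 / (t + 1) := by
        rw [hδdef]; field_simp; ring
      have h4 : g v ^ 2 * (1 / (t + 1)) ≤ (p - 1) / q * g v ^ 2 := by
        nlinarith [sq_nonneg (g v), htpq.le]
      rw [h3]; rw [h2] at h1; linarith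
    nlinarith [mul_nonneg hApow.le (sub_nonneg.mpr hkey)]
  -- assemble
  refine convexOn_of_deriv2_nonneg (convex_Ioi 0) ?_ ?_ ?_ ?_
  · intro v hv; exact (hQ' v hv).continuousAt.continuousWithinAt
  · rw [interior_Ioi]; intro v hv
    exact (hQ' v hv).differentiableAt.differentiableWithinAt
  · rw [interior_Ioi]; intro v hv
    have heq : deriv (fun u => G u ^ δ) =ᶠ[nhds v] F' := by
      filter_upwards [isOpen_Ioi.mem_nhds hv] with u hu
      exact (hQ' u hu).deriv
    exact ((hF'deriv v hv).differentiableAt.congr_of_eventuallyEq heq).differentiableWithinAt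
  · rw [interior_Ioi]; intro v hv
    have heq : deriv (fun u => G u ^ δ) =ᶠ[nhds v] F' := by
      filter_upwards [isOpen_Ioi.mem_nhds hv] with u hu
      exact (hQ' u hu).deriv
    simp only [Function.iterate_succ, Function.iterate_zero, Function.comp_apply, id]
    rw [heq.deriv_eq, (hF'deriv v hv).deriv]
    exact hS v hv
end

section
/- Let n ≥ 1. There exists a constant γ > 0 depending only on n with the following property: for every y ∈ ℝⁿ, every r > 0, every function u that is continuously differentiable on the closed ball of radius r centered at y, and all real numbers k < l, one has (l − k) · |A_{k,r}| · |B_r(y) ∖ A_{l,r}| ≤ γ · r^{n+1} · ∫_{A_{l,r} ∖ A_{k,r}} ‖∇u(x)‖ dx, where B_r(y) is the open ball of radius r centered at y, A_{m,r} = {x ∈ B_r(y) : u(x) < m} for a real number m, |·| denotes n-dimensional Lebesgue measure, and ∇u is the gradient of u. -/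
open MeasureTheory Metric Set
open scoped ENNReal

lemma aux_lint_smul (n : ℕ) (G : EuclideanSpace ℝ (Fin n) → ℝ≥0∞) (hG : Measurable G)
    (c : EuclideanSpace ℝ (Fin n)) {t : ℝ} (ht : 0 < t) :
    ∫⁻ z, G (c + t • z) = ENNReal.ofReal ((t ^ n)⁻¹) * ∫⁻ z, G z := by
  have habs : |(t ^ n)⁻¹| = (t ^ n)⁻¹ := abs_of_nonneg (by positivity)
  have h2 : ∫⁻ w, G (c + w) = ∫⁻ z, G z := by
    conv_rhs => rw [← map_add_left_eq_self volume c]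
    rw [lintegral_map hG (measurable_const_add c)]
  calc ∫⁻ z, G (c + t • z)
      = ∫⁻ w, G (c + w) ∂(Measure.map (t • ·) volume) :=
        (lintegral_map (hG.comp (measurable_const_add c)) (measurable_const_smul t)).symm
    _ = ENNReal.ofReal ((t ^ n)⁻¹) * ∫⁻ z, G z := by
        rw [Measure.map_addHaar_smul volume ht.ne', finrank_euclideanSpace_fin,
          lintegral_smul_measure, habs, h2, smul_eq_mul]

set_option maxHeartbeats 1000000 in
/-- De Giorgi–Poincaré lemma (Lemma 2.1 of the paper), stated for continuously
differentiable functions. -/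
theorem stmt_9 (n : ℕ) (hn : 1 ≤ n) :
    ∃ γ : ℝ, 0 < γ ∧
      ∀ (y : EuclideanSpace ℝ (Fin n)) (r : ℝ) (u : EuclideanSpace ℝ (Fin n) → ℝ)
        (k l : ℝ), 0 < r →
        ContDiffOn ℝ 1 u (Metric.closedBall y r) → k < l →
        (l - k) * (volume {x ∈ Metric.ball y r | u x < k}).toReal *
            (volume (Metric.ball y r \ {x ∈ Metric.ball y r | u x < l})).toReal ≤
          γ * r ^ (n + 1) *
            ∫ x in {x ∈ Metric.ball y r | u x < l} \ {x ∈ Metric.ball y r | u x < k},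
              ‖gradient u x‖ := by
  classical
  have hnontriv : Nontrivial (EuclideanSpace ℝ (Fin n)) := by
    refine Module.nontrivial_of_finrank_pos (R := ℝ) ?_
    rw [finrank_euclideanSpace_fin]; omega
  set c : ℝ := (volume (ball (0 : EuclideanSpace ℝ (Fin n)) 1)).toReal with hc
  have hball1 : volume (ball (0 : EuclideanSpace ℝ (Fin n)) 1) = ENNReal.ofReal c :=
    (ENNReal.ofReal_toReal measure_ball_lt_top.ne).symm
  have hc_pos : 0 < c :=
    ENNReal.toReal_pos (measure_ball_pos _ _ one_pos).ne' measure_ball_lt_top.ne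
  refine ⟨2 ^ (n + 1) * c, by positivity, ?_⟩
  intro y r u k l hr hu hkl
  set B := ball y r with hB
  set S1 := {x ∈ B | u x < k} with hS1def
  set Sl := {x ∈ B | u x < l} with hSldef
  set S2 := B \ Sl with hS2def
  set D := Sl \ S1 with hDdef
  have hS1B : S1 ⊆ B := fun x hx => hx.1
  have hS2B : S2 ⊆ B := fun x hx => hx.1
  have hDB : D ⊆ B := fun x hx => hx.1.1
  have hucont : ContinuousOn u B := hu.continuousOn.mono ball_subset_closedBall
  have hSlopen : IsOpen Sl := by
    have h : Sl = B ∩ u ⁻¹' Iio l := rfl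
    rw [h]; exact hucont.isOpen_inter_preimage isOpen_ball isOpen_Iio
  have hS1open : IsOpen S1 := by
    have h : S1 = B ∩ u ⁻¹' Iio k := rfl
    rw [h]; exact hucont.isOpen_inter_preimage isOpen_ball isOpen_Iio
  have hS1m : MeasurableSet S1 := hS1open.measurableSet
  have hSlm : MeasurableSet Sl := hSlopen.measurableSet
  have hS2m : MeasurableSet S2 := measurableSet_ball.diff hSlm
  have hDm : MeasurableSet D := hSlm.diff hS1m
  -- differentiability
  have hdiff : ∀ w ∈ B, DifferentiableAt ℝ u w := fun w hw =>
    (hu.differentiableOn one_ne_zero).differentiableAt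
      (Filter.mem_of_superset (isOpen_ball.mem_nhds hw) ball_subset_closedBall)
  have hfc : ContinuousOn (fderiv ℝ u) B :=
    (hu.mono ball_subset_closedBall).continuousOn_fderiv_of_isOpen isOpen_ball le_rfl
  have hgradnorm : ∀ w, ‖gradient u w‖ = ‖fderiv ℝ u w‖ := fun w =>
    LinearIsometryEquiv.norm_map _ _
  set G : EuclideanSpace ℝ (Fin n) → ℝ≥0∞ :=
    D.indicator (fun w => ENNReal.ofReal ‖fderiv ℝ u w‖) with hGdef
  have hGmeas : Measurable G :=
    ((measurable_fderiv ℝ u).norm.ennreal_ofReal).indicator hDm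
  -- boundedness of the derivative on the ball
  obtain ⟨M, hM⟩ : ∃ M, ∀ w ∈ B, ‖fderiv ℝ u w‖ ≤ M := by
    have hUD : UniqueDiffOn ℝ (closedBall y r) :=
      uniqueDiffOn_convex (convex_closedBall y r)
        (by rw [interior_closedBall y hr.ne']; exact nonempty_ball.2 hr)
    obtain ⟨M, hM⟩ := (isCompact_closedBall y r).exists_bound_of_continuousOn
      (hu.continuousOn_fderivWithin hUD le_rfl)
    refine ⟨M, fun w hw => ?_⟩
    have : fderivWithin ℝ u (closedBall y r) w = fderiv ℝ u w :=
      fderivWithin_of_mem_nhds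
        (Filter.mem_of_superset (isOpen_ball.mem_nhds hw) ball_subset_closedBall)
    rw [← this]; exact hM w (ball_subset_closedBall hw)
  -- integrability on D
  have hintD : IntegrableOn (fun x => ‖fderiv ℝ u x‖) D volume := by
    refine Measure.integrableOn_of_bounded (M := M)
      (ne_of_lt (lt_of_le_of_lt (measure_mono hDB) measure_ball_lt_top))
      ((measurable_fderiv ℝ u).norm.aestronglyMeasurable) ?_
    refine (ae_restrict_iff' hDm).2 (ae_of_all _ fun x hx => ?_)
    rw [Real.norm_eq_abs, abs_of_nonneg (norm_nonneg _)]
    exact hM x (hDB hx)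
  set Ig : ℝ := ∫ x in D, ‖gradient u x‖ with hIg
  have hgradfun : (fun x => ‖gradient u x‖) = fun x => ‖fderiv ℝ u x‖ := funext hgradnorm
  have hIg_nonneg : 0 ≤ Ig := integral_nonneg fun x => norm_nonneg _
  have hGint : ∫⁻ w, G w = ENNReal.ofReal Ig := by
    rw [hGdef, lintegral_indicator hDm, hIg, hgradfun,
      ← ofReal_integral_eq_lintegral_ofReal hintD (ae_of_all _ fun x => norm_nonneg _)]
  
  -- Key one-dimensional lemma
  have keyA : ∀ x ∈ S1, ∀ z ∈ S2, ENNReal.ofReal (l - k) ≤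
      ∫⁻ t in Ioo (0:ℝ) 1, ENNReal.ofReal (2 * r) * G (x + t • (z - x)) := by
    rintro x ⟨hxB, hxk⟩ z ⟨hzB, hzl⟩
    have hzl' : l ≤ u z := not_lt.1 fun h => hzl ⟨hzB, h⟩
    set φ : ℝ → EuclideanSpace ℝ (Fin n) := fun t => x + t • (z - x) with hφ
    have hφ0 : φ 0 = x := by simp [hφ]
    have hφ1 : φ 1 = z := by simp [hφ]
    have hφmem : ∀ t ∈ Icc (0:ℝ) 1, φ t ∈ B := by
      intro t ht
      have h := (convex_ball y r) hxB hzB (by linarith [ht.2] : (0:ℝ) ≤ 1 - t) ht.1 (by ring)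
      have he : (1 - t) • x + t • z = φ t := by rw [hφ]; simp only; module
      rwa [he] at h
    set f : ℝ → ℝ := fun t => u (φ t) with hf
    have hf' : ∀ t ∈ Icc (0:ℝ) 1, HasDerivAt f (fderiv ℝ u (φ t) (z - x)) t := by
      intro t ht
      have h1 : HasDerivAt φ (z - x) t := by
        simpa [hφ] using ((hasDerivAt_id t).smul_const (z - x)).const_add x
      exact (hdiff _ (hφmem t ht)).hasFDerivAt.comp_hasDerivAt t h1
    have hfc2 : ContinuousOn f (Icc 0 1) := fun t ht =>
      ((hf' t ht).continuousAt).continuousWithinAt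
    set T := {t ∈ Icc (0:ℝ) 1 | l ≤ f t} with hT
    have hTne : (1:ℝ) ∈ T := ⟨⟨zero_le_one, le_rfl⟩, by simpa [hf, hφ1] using hzl'⟩
    have hTclosed : IsClosed T := by
      have h : T = Icc 0 1 ∩ f ⁻¹' Ici l := rfl
      rw [h]; exact hfc2.preimage_isClosed_of_isClosed isClosed_Icc isClosed_Ici
    have hTbdd : BddBelow T := ⟨0, fun t ht => ht.1.1⟩
    set b := sInf T with hb
    have hbT : b ∈ T := hTclosed.csInf_mem ⟨1, hTne⟩ hTbdd
    have hb01 : b ∈ Icc (0:ℝ) 1 := hbT.1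
    have hfb : l ≤ f b := hbT.2
    have hblt : ∀ t, 0 ≤ t → t < b → f t < l := by
      intro t ht0 htb
      by_contra h
      have hmem : t ∈ T := ⟨⟨ht0, le_trans htb.le hb01.2⟩, not_lt.1 h⟩
      exact absurd (csInf_le hTbdd hmem) (not_le.2 htb)
    set A := {t ∈ Icc (0:ℝ) b | f t ≤ k} with hA
    have hA0 : (0:ℝ) ∈ A := ⟨⟨le_rfl, hb01.1⟩, by simpa [hf, hφ0] using hxk.le⟩
    have hAclosed : IsClosed A := by
      have hsub : Icc (0:ℝ) b ⊆ Icc 0 1 := Icc_subset_Icc le_rfl hb01.2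
      have h : A = Icc 0 b ∩ f ⁻¹' Iic k := rfl
      rw [h]; exact (hfc2.mono hsub).preimage_isClosed_of_isClosed isClosed_Icc isClosed_Iic
    have hAbdd : BddAbove A := ⟨b, fun t ht => ht.1.2⟩
    set a := sSup A with ha
    have haA : a ∈ A := hAclosed.csSup_mem ⟨0, hA0⟩ hAbdd
    have ha0b : a ∈ Icc (0:ℝ) b := haA.1
    have hfa : f a ≤ k := haA.2
    have hab : a < b := by
      rcases eq_or_lt_of_le ha0b.2 with h | h
      · exfalso; rw [h] at hfa; linarith
      · exact h
    have ha01 : a ∈ Icc (0:ℝ) 1 := ⟨ha0b.1, le_trans ha0b.2 hb01.2⟩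
    have hmid : ∀ t ∈ Ioo a b, k < f t ∧ f t < l := by
      intro t ht
      constructor
      · by_contra h
        have hmem : t ∈ A := ⟨⟨le_trans ha0b.1 ht.1.le, ht.2.le⟩, not_lt.1 h⟩
        exact absurd (le_csSup hAbdd hmem) (not_le.2 ht.1)
      · exact hblt t (le_trans ha0b.1 ht.1.le) ht.2
    have hIccab : Icc a b ⊆ Icc (0:ℝ) 1 := Icc_subset_Icc ha01.1 hb01.2
    have hφc : Continuous φ := by
      rw [hφ]; exact continuous_const.add (continuous_id.smul continuous_const)
    have hφcont : ContinuousOn φ (Icc a b) := hφc.continuousOn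
    have hfdφ : ContinuousOn (fun t => fderiv ℝ u (φ t)) (Icc a b) :=
      hfc.comp hφcont fun t ht => hφmem t (hIccab ht)
    have hf'cont : ContinuousOn (fun t => fderiv ℝ u (φ t) (z - x)) (Icc a b) :=
      hfdφ.clm_apply continuousOn_const
    have hInt1 : IntervalIntegrable (fun t => fderiv ℝ u (φ t) (z - x)) volume a b :=
      (hf'cont.mono (by rw [uIcc_of_le hab.le])).intervalIntegrable
    have hFTC : ∫ t in a..b, fderiv ℝ u (φ t) (z - x) = f b - f a :=
      intervalIntegral.integral_eq_sub_of_hasDerivAt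
        (fun t ht => hf' t (hIccab (by rwa [uIcc_of_le hab.le] at ht))) hInt1
    set Φ : ℝ → ℝ := fun t => 2 * r * ‖fderiv ℝ u (φ t)‖ with hΦ
    have hΦcont : ContinuousOn Φ (Icc a b) := continuousOn_const.mul hfdφ.norm
    have hIntΦ : IntervalIntegrable Φ volume a b :=
      (hΦcont.mono (by rw [uIcc_of_le hab.le])).intervalIntegrable
    have hnormzx : ‖z - x‖ ≤ 2 * r := by
      have h1 : dist z y < r := mem_ball.1 hzB
      have h2 : dist x y < r := mem_ball.1 hxB
      calc ‖z - x‖ = dist z x := (dist_eq_norm z x).symm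
        _ ≤ dist z y + dist y x := dist_triangle _ _ _
        _ ≤ 2 * r := by rw [dist_comm y x]; linarith
    have hptbd : ∀ t ∈ Icc a b, fderiv ℝ u (φ t) (z - x) ≤ Φ t := by
      intro t _
      calc fderiv ℝ u (φ t) (z - x) ≤ ‖fderiv ℝ u (φ t) (z - x)‖ := le_abs_self _
        _ ≤ ‖fderiv ℝ u (φ t)‖ * ‖z - x‖ := ContinuousLinearMap.le_opNorm _ _
        _ ≤ ‖fderiv ℝ u (φ t)‖ * (2 * r) :=
            mul_le_mul_of_nonneg_left hnormzx (norm_nonneg _)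
        _ = Φ t := by rw [hΦ]; ring
    have hstep1 : l - k ≤ ∫ t in a..b, Φ t := by
      have h1 : l - k ≤ f b - f a := by linarith
      rw [← hFTC] at h1
      exact h1.trans (intervalIntegral.integral_mono_on hab.le hInt1 hIntΦ hptbd)
    have h2 : ENNReal.ofReal (l - k) ≤ ENNReal.ofReal (∫ t in a..b, Φ t) :=
      ENNReal.ofReal_le_ofReal hstep1
    rw [intervalIntegral.integral_of_le hab.le,
      ofReal_integral_eq_lintegral_ofReal hIntΦ.1
        (ae_of_all _ fun t => by positivity)] at h2
    have h3 : ∫⁻ t in Ioc a b, ENNReal.ofReal (Φ t) =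
        ∫⁻ t in Ioo a b, ENNReal.ofReal (Φ t) :=
      (setLIntegral_congr Ioo_ae_eq_Ioc).symm
    have h4 : ∫⁻ t in Ioo a b, ENNReal.ofReal (Φ t) =
        ∫⁻ t in Ioo a b, ENNReal.ofReal (2 * r) * G (x + t • (z - x)) := by
      refine setLIntegral_congr_fun measurableSet_Ioo (fun t ht => ?_)
      have hmem := hmid t ht
      have htIcc : t ∈ Icc (0:ℝ) 1 :=
        hIccab ⟨ht.1.le, ht.2.le⟩
      have hφD : φ t ∈ D :=
        ⟨⟨hφmem t htIcc, hmem.2⟩, fun hc' => absurd hc'.2 (not_lt.2 hmem.1.le)⟩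
      rw [hΦ]
      simp only
      rw [ENNReal.ofReal_mul (by positivity)]
      congr 1
      rw [hGdef, indicator_of_mem hφD]
    have h5 : ∫⁻ t in Ioo a b, ENNReal.ofReal (2 * r) * G (x + t • (z - x)) ≤
        ∫⁻ t in Ioo (0:ℝ) 1, ENNReal.ofReal (2 * r) * G (x + t • (z - x)) :=
      lintegral_mono_set (Ioo_subset_Ioo ha01.1 hb01.2)
    exact ((h2.trans_eq h3).trans_eq h4).trans h5
  
  -- measurability helpers
  have hmeas2 : ∀ x0 : EuclideanSpace ℝ (Fin n),
      Measurable fun p : EuclideanSpace ℝ (Fin n) × ℝ =>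
        ENNReal.ofReal (2 * r) * G (x0 + p.2 • (p.1 - x0)) := fun x0 =>
    Measurable.const_mul (hGmeas.comp
      ((continuous_const.add (continuous_snd.smul
        (continuous_fst.sub continuous_const))).measurable)) _
  have hmeas3 : Measurable fun q : (EuclideanSpace ℝ (Fin n) × ℝ) × EuclideanSpace ℝ (Fin n) =>
      ENNReal.ofReal (2 * r) * G (q.1.1 + q.1.2 • (q.2 - q.1.1)) :=
    Measurable.const_mul (hGmeas.comp
      ((continuous_fst.fst.add (continuous_fst.snd.smul
        (continuous_snd.sub continuous_fst.fst))).measurable)) _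
  have hmeas4 : Measurable fun p : EuclideanSpace ℝ (Fin n) × ℝ =>
      ∫⁻ z in S2, ENNReal.ofReal (2 * r) * G (p.1 + p.2 • (z - p.1)) :=
    Measurable.lintegral_prod_right' hmeas3
  have hmeas5 : ∀ t : ℝ, Measurable fun p : EuclideanSpace ℝ (Fin n) × EuclideanSpace ℝ (Fin n) =>
      G (p.1 + t • (p.2 - p.1)) := fun t =>
    hGmeas.comp (((continuous_fst.add ((continuous_snd.sub continuous_fst).const_smul t) : Continuous fun p : EuclideanSpace ℝ (Fin n) × EuclideanSpace ℝ (Fin n) => p.1 + t • (p.2 - p.1))).measurable)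
  have hB1 : ENNReal.ofReal (l - k) * volume S1 * volume S2 ≤
      ∫⁻ x in S1, ∫⁻ z in S2, ∫⁻ t in Ioo (0:ℝ) 1, ENNReal.ofReal (2 * r) * G (x + t • (z - x)) := by
    have h0 : ENNReal.ofReal (l - k) * volume S1 * volume S2 =
        ∫⁻ _x in S1, ∫⁻ _z in S2, ENNReal.ofReal (l - k) := by
      rw [setLIntegral_const, setLIntegral_const]; ring
    rw [h0]
    exact setLIntegral_mono' hS1m fun x hx =>
      setLIntegral_mono' hS2m fun z hz => keyA x hx z hz
  have hB2 : (∫⁻ x in S1, ∫⁻ z in S2, ∫⁻ t in Ioo (0:ℝ) 1, ENNReal.ofReal (2 * r) * G (x + t • (z - x)))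
      = ∫⁻ t in Ioo (0:ℝ) 1, ∫⁻ x in S1, ∫⁻ z in S2, ENNReal.ofReal (2 * r) * G (x + t • (z - x)) := by
    have step1 : ∀ x0 : EuclideanSpace ℝ (Fin n),
        (∫⁻ z in S2, ∫⁻ t in Ioo (0:ℝ) 1, ENNReal.ofReal (2 * r) * G (x0 + t • (z - x0)))
        = ∫⁻ t in Ioo (0:ℝ) 1, ∫⁻ z in S2, ENNReal.ofReal (2 * r) * G (x0 + t • (z - x0)) := fun x0 =>
      lintegral_lintegral_swap (hmeas2 x0).aemeasurable
    rw [lintegral_congr step1]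
    exact lintegral_lintegral_swap hmeas4.aemeasurable
  have hpow : ∀ s : ℝ, 1 / 2 ≤ s → (s ^ n)⁻¹ ≤ 2 ^ n := by
    intro s hs
    have h1 : ((1:ℝ) / 2) ^ n ≤ s ^ n := pow_le_pow_left₀ (by norm_num) hs n
    have h2 : (0:ℝ) < ((1:ℝ) / 2) ^ n := by positivity
    calc (s ^ n)⁻¹ ≤ (((1:ℝ) / 2) ^ n)⁻¹ := inv_anti₀ h2 h1
      _ = 2 ^ n := by rw [one_div, inv_pow, inv_inv]
  have hKbd : ∀ t ∈ Ioo (0:ℝ) 1, (∫⁻ x in S1, ∫⁻ z in S2, ENNReal.ofReal (2 * r) * G (x + t • (z - x)))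
      ≤ ENNReal.ofReal (2 * r) * (ENNReal.ofReal ((2:ℝ) ^ n) * (volume B * ∫⁻ w, G w)) := by
    intro t ht
    have hpull : (∫⁻ x in S1, ∫⁻ z in S2, ENNReal.ofReal (2 * r) * G (x + t • (z - x)))
        = ENNReal.ofReal (2 * r) * ∫⁻ x in S1, ∫⁻ z in S2, G (x + t • (z - x)) := by
      rw [← lintegral_const_mul' _ _ ENNReal.ofReal_ne_top]
      exact lintegral_congr fun x => lintegral_const_mul' _ _ ENNReal.ofReal_ne_top
    rw [hpull]
    refine mul_le_mul_right ?_ _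
    by_cases hhalf : 1 / 2 ≤ t
    · have hz : ∀ x0 : EuclideanSpace ℝ (Fin n), (∫⁻ z in S2, G (x0 + t • (z - x0))) ≤
          ENNReal.ofReal ((2:ℝ) ^ n) * ∫⁻ w, G w := by
        intro x0
        calc (∫⁻ z in S2, G (x0 + t • (z - x0))) ≤ ∫⁻ z, G (x0 + t • (z - x0)) :=
              setLIntegral_le_lintegral _ _
          _ = ∫⁻ z, G ((x0 - t • x0) + t • z) := lintegral_congr fun z => by congr 1; module
          _ = ENNReal.ofReal ((t ^ n)⁻¹) * ∫⁻ w, G w := aux_lint_smul n G hGmeas _ ht.1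
          _ ≤ ENNReal.ofReal ((2:ℝ) ^ n) * ∫⁻ w, G w :=
              mul_le_mul_left (ENNReal.ofReal_le_ofReal (hpow t hhalf)) _
      calc (∫⁻ x in S1, ∫⁻ z in S2, G (x + t • (z - x)))
          ≤ ∫⁻ _x in S1, (ENNReal.ofReal ((2:ℝ) ^ n) * ∫⁻ w, G w) :=
            setLIntegral_mono' hS1m fun x0 _ => hz x0
        _ = (ENNReal.ofReal ((2:ℝ) ^ n) * ∫⁻ w, G w) * volume S1 := setLIntegral_const _ _
        _ ≤ (ENNReal.ofReal ((2:ℝ) ^ n) * ∫⁻ w, G w) * volume B :=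
            mul_le_mul_right (measure_mono hS1B) _
        _ = ENNReal.ofReal ((2:ℝ) ^ n) * (volume B * ∫⁻ w, G w) := by ring
    · push_neg at hhalf
      have h1t : (0:ℝ) < 1 - t := by have := ht.2; linarith [ht.2]
      have hswap : (∫⁻ x in S1, ∫⁻ z in S2, G (x + t • (z - x)))
          = ∫⁻ z in S2, ∫⁻ x in S1, G (x + t • (z - x)) :=
        lintegral_lintegral_swap (hmeas5 t).aemeasurable
      rw [hswap]
      have hx : ∀ z0 : EuclideanSpace ℝ (Fin n), (∫⁻ x in S1, G (x + t • (z0 - x))) ≤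
          ENNReal.ofReal ((2:ℝ) ^ n) * ∫⁻ w, G w := by
        intro z0
        calc (∫⁻ x in S1, G (x + t • (z0 - x))) ≤ ∫⁻ x, G (x + t • (z0 - x)) :=
              setLIntegral_le_lintegral _ _
          _ = ∫⁻ x, G (t • z0 + (1 - t) • x) := lintegral_congr fun x => by congr 1; module
          _ = ENNReal.ofReal (((1 - t) ^ n)⁻¹) * ∫⁻ w, G w := aux_lint_smul n G hGmeas _ h1t
          _ ≤ ENNReal.ofReal ((2:ℝ) ^ n) * ∫⁻ w, G w :=
              mul_le_mul_left (ENNReal.ofReal_le_ofReal (hpow (1 - t) (by linarith))) _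
      calc (∫⁻ z in S2, ∫⁻ x in S1, G (x + t • (z - x)))
          ≤ ∫⁻ _z in S2, (ENNReal.ofReal ((2:ℝ) ^ n) * ∫⁻ w, G w) :=
            setLIntegral_mono' hS2m fun z0 _ => hx z0
        _ = (ENNReal.ofReal ((2:ℝ) ^ n) * ∫⁻ w, G w) * volume S2 := setLIntegral_const _ _
        _ ≤ (ENNReal.ofReal ((2:ℝ) ^ n) * ∫⁻ w, G w) * volume B :=
            mul_le_mul_right (measure_mono hS2B) _
        _ = ENNReal.ofReal ((2:ℝ) ^ n) * (volume B * ∫⁻ w, G w) := by ring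
  have hB4 : (∫⁻ t in Ioo (0:ℝ) 1, ∫⁻ x in S1, ∫⁻ z in S2, ENNReal.ofReal (2 * r) * G (x + t • (z - x)))
      ≤ ENNReal.ofReal (2 * r) * (ENNReal.ofReal ((2:ℝ) ^ n) * (volume B * ∫⁻ w, G w)) := by
    calc (∫⁻ t in Ioo (0:ℝ) 1, ∫⁻ x in S1, ∫⁻ z in S2, ENNReal.ofReal (2 * r) * G (x + t • (z - x)))
        ≤ ∫⁻ _t in Ioo (0:ℝ) 1,
            (ENNReal.ofReal (2 * r) * (ENNReal.ofReal ((2:ℝ) ^ n) * (volume B * ∫⁻ w, G w))) :=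
          setLIntegral_mono' measurableSet_Ioo hKbd
      _ = (ENNReal.ofReal (2 * r) * (ENNReal.ofReal ((2:ℝ) ^ n) * (volume B * ∫⁻ w, G w)))
            * volume (Ioo (0:ℝ) 1) := setLIntegral_const _ _
      _ = ENNReal.ofReal (2 * r) * (ENNReal.ofReal ((2:ℝ) ^ n) * (volume B * ∫⁻ w, G w)) := by
          rw [Real.volume_Ioo]; norm_num
  have hvolB : volume B = ENNReal.ofReal (r ^ n * c) := by
    rw [hB, Measure.addHaar_ball volume y hr.le, finrank_euclideanSpace_fin, hball1,
      ← ENNReal.ofReal_mul (pow_nonneg hr.le n)]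
  have hfinal : ENNReal.ofReal (l - k) * volume S1 * volume S2 ≤
      ENNReal.ofReal (2 ^ (n + 1) * c * r ^ (n + 1) * Ig) := by
    calc ENNReal.ofReal (l - k) * volume S1 * volume S2
        ≤ ∫⁻ t in Ioo (0:ℝ) 1, ∫⁻ x in S1, ∫⁻ z in S2, ENNReal.ofReal (2 * r) * G (x + t • (z - x)) :=
          hB1.trans_eq hB2
      _ ≤ ENNReal.ofReal (2 * r) * (ENNReal.ofReal ((2:ℝ) ^ n) * (volume B * ∫⁻ w, G w)) := hB4
      _ = ENNReal.ofReal (2 * r) * (ENNReal.ofReal ((2:ℝ) ^ n)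
            * (ENNReal.ofReal (r ^ n * c) * ENNReal.ofReal Ig)) := by rw [hvolB, hGint]
      _ = ENNReal.ofReal ((2 * r) * ((2:ℝ) ^ n * (r ^ n * c * Ig))) := by
          rw [ENNReal.ofReal_mul (by positivity : (0:ℝ) ≤ 2 * r),
            ENNReal.ofReal_mul (by positivity : (0:ℝ) ≤ (2:ℝ) ^ n),
            ENNReal.ofReal_mul (mul_nonneg (pow_nonneg hr.le n) hc_pos.le)]
      _ = ENNReal.ofReal (2 ^ (n + 1) * c * r ^ (n + 1) * Ig) := by congr 1; ring
  have hLHSe : (l - k) * (volume S1).toReal * (volume S2).toReal =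
      (ENNReal.ofReal (l - k) * volume S1 * volume S2).toReal := by
    rw [ENNReal.toReal_mul, ENNReal.toReal_mul, ENNReal.toReal_ofReal (by linarith)]
  rw [hLHSe]
  exact ENNReal.toReal_le_of_le_ofReal
    (mul_nonneg (by positivity) hIg_nonneg) hfinal
end

section
/- Let n ≥ 1, let Ω ⊂ ℝⁿ be a bounded open set and set R = diam Ω. Let Q : [0,∞) → [0,∞) be increasing, convex and continuous with Q(0) = 0 and Q(s)/s ≤ Q(t)/t for all 0 < s ≤ t. Then for every function u : ℝⁿ → ℝ that is continuously differentiable and has compact support contained in Ω, one has ∫_Ω Q(|u(x)|/R) dx ≤ ∫_Ω Q(‖∇u(x)‖) dx. -/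
set_option maxHeartbeats 1000000

open MeasureTheory Set

lemma line_est {n : ℕ} (Ω : Set (EuclideanSpace ℝ (Fin n)))
    (hΩopen : IsOpen Ω) (hΩbdd : Bornology.IsBounded Ω)
    (Q : ℝ → ℝ)
    (hQmono : MonotoneOn Q (Set.Ici 0))
    (hQconv : ConvexOn ℝ (Set.Ici 0) Q)
    (hQcont : ContinuousOn Q (Set.Ici 0))
    (hQ0 : Q 0 = 0)
    (u : EuclideanSpace ℝ (Fin n) → ℝ)
    (hu : ContDiff ℝ 1 u) (husupp : HasCompactSupport u)
    (husuppΩ : tsupport u ⊆ Ω)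
    (z e : EuclideanSpace ℝ (Fin n)) (he : ‖e‖ = 1) :
    ∫ t in {t : ℝ | z + t • e ∈ Ω}, Q (|u (z + t • e)| / Metric.diam Ω)
      ≤ ∫ t in {t : ℝ | z + t • e ∈ Ω}, Q ‖gradient u (z + t • e)‖ := by
  set R := Metric.diam Ω with hR
  have hQnn : ∀ t : ℝ, 0 ≤ t → 0 ≤ Q t := fun t ht => by
    have := hQmono (le_refl (0:ℝ)) ht ht
    rwa [hQ0] at this
  have hgradnorm : ∀ x, ‖gradient u x‖ = ‖fderiv ℝ u x‖ := fun x =>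
    (InnerProductSpace.toDual ℝ _).symm.norm_map _
  have contL : Continuous fun t : ℝ => z + t • e :=
    continuous_const.add (continuous_id.smul continuous_const)
  set S : Set ℝ := {t : ℝ | z + t • e ∈ Ω} with hSdef
  have hSopen : IsOpen S := hΩopen.preimage contL
  have hSmeas : MeasurableSet S := hSopen.measurableSet
  -- bound on S
  obtain ⟨r, hr⟩ := hΩbdd.subset_closedBall 0
  set C : ℝ := |r| + ‖z‖ with hC
  have hKsub : ∀ t : ℝ, z + t • e ∈ Ω → |t| ≤ C := by
    intro t ht
    have h1 : ‖z + t • e‖ ≤ r := by simpa using hr ht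
    have h2 : |t| = ‖t • e‖ := by rw [norm_smul, he, mul_one]; rfl
    have h3 : ‖t • e‖ = ‖(z + t • e) - z‖ := by congr 1; abel
    rw [h2, h3]
    calc ‖(z + t • e) - z‖ ≤ ‖z + t • e‖ + ‖z‖ := norm_sub_le _ _
      _ ≤ |r| + ‖z‖ := by have := le_abs_self r; linarith
  have hIcc : S ⊆ Icc (-C) C := fun t ht => abs_le.1 (hKsub t ht)
  have hvolS : volume S ≤ ENNReal.ofReal R := by
    refine (Real.volume_le_diam S).trans (EMetric.diam_le fun s hs t ht => ?_)
    rw [edist_dist]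
    refine ENNReal.ofReal_le_ofReal ?_
    have hd : dist s t = dist (z + s • e) (z + t • e) := by
      rw [dist_eq_norm, dist_eq_norm]
      have : (z + s • e) - (z + t • e) = (s - t) • e := by
        rw [sub_smul]; abel
      rw [this, norm_smul, he, mul_one]
    rw [hd]
    exact Metric.dist_le_diam_of_mem hΩbdd hs ht
  have hvol_lt_top : volume S < ⊤ := lt_of_le_of_lt hvolS ENNReal.ofReal_lt_top
  -- derivative along the line
  set g' : ℝ → ℝ := fun t => fderiv ℝ u (z + t • e) e with hg'def
  have hder : ∀ t : ℝ, HasDerivAt (fun s : ℝ => u (z + s • e)) (g' t) t := by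
    intro t
    have h1 : HasDerivAt (fun s : ℝ => z + s • e) e t := by
      simpa using ((hasDerivAt_id t).smul_const e).const_add z
    exact ((hu.differentiable one_ne_zero) _).hasFDerivAt.comp_hasDerivAt t h1
  have contg' : Continuous g' :=
    ((hu.continuous_fderiv one_ne_zero).comp contL).clm_apply continuous_const
  have hg'zero : ∀ t : ℝ, t ∉ S → g' t = 0 := by
    intro t ht
    have hx : z + t • e ∉ tsupport u := fun hx => ht (husuppΩ hx)
    have hev : u =ᶠ[nhds (z + t • e)] (fun _ => (0:ℝ)) := by
      filter_upwards [(isClosed_tsupport u).isOpen_compl.mem_nhds hx] with y hy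
      exact image_eq_zero_of_notMem_tsupport hy
    rw [hg'def]
    simp only [hev.fderiv_eq, fderiv_const]
    simp
  have huzero : ∀ t : ℝ, t ∉ S → u (z + t • e) = 0 := fun t ht =>
    image_eq_zero_of_notMem_tsupport (fun hx => ht (husuppΩ hx))
  have hcs : HasCompactSupport g' := by
    refine HasCompactSupport.intro (isCompact_Icc : IsCompact (Icc (-C) C)) ?_
    intro t ht
    exact hg'zero t fun hts => ht (hIcc hts)
  have hg'int : Integrable g' := contg'.integrable_of_hasCompactSupport hcs
  set φ : ℝ → ℝ := fun t => |g' t| with hφdef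
  have contφ : Continuous φ := contg'.abs
  have habs_int : Integrable φ := hg'int.abs
  -- key FTC bound
  have key : ∀ t₀ ∈ S, |u (z + t₀ • e)| ≤ ∫ t in S, |g' t| := by
    intro t₀ ht₀
    set T : ℝ := C + 1 with hT
    have hC0 : 0 ≤ C := le_trans (abs_nonneg r) (le_add_of_nonneg_right (norm_nonneg z))
    have hTS : T ∉ S := by
      intro h
      have := hKsub T h
      rw [abs_of_nonneg (by linarith)] at this
      linarith
    have ht₀T : t₀ ≤ T := by
      have := hKsub t₀ ht₀
      have := le_of_abs_le this
      linarith
    have hftc : ∫ t in t₀..T, g' t = u (z + T • e) - u (z + t₀ • e) :=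
      intervalIntegral.integral_eq_sub_of_hasDerivAt (fun t _ => hder t)
        hg'int.intervalIntegrable
    have hzT : u (z + T • e) = 0 := huzero T hTS
    calc |u (z + t₀ • e)| = |∫ t in t₀..T, g' t| := by
          rw [hftc, hzT, zero_sub, abs_neg]
      _ ≤ ∫ t in t₀..T, |g' t| :=
          intervalIntegral.abs_integral_le_integral_abs ht₀T
      _ = ∫ t in Ioc t₀ T, |g' t| := intervalIntegral.integral_of_le ht₀T
      _ ≤ ∫ t, φ t := setIntegral_le_integral habs_int
            (Filter.Eventually.of_forall fun t => abs_nonneg _)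
      _ = ∫ t in S, φ t :=
          (setIntegral_eq_integral_of_forall_compl_eq_zero fun t ht => by
            show |g' t| = 0
            rw [hg'zero t ht, abs_zero]).symm
  -- trivial case : measure zero
  by_cases hS0 : volume S = 0
  · have : volume.restrict S = 0 := Measure.restrict_eq_zero.2 hS0
    rw [this]
    simp only [integral_zero_measure]
    exact le_refl 0
  · set ℓ : ℝ := (volume S).toReal with hℓ
    have hℓpos : 0 < ℓ := ENNReal.toReal_pos hS0 hvol_lt_top.ne
    have hℓR : ℓ ≤ R := ENNReal.toReal_le_of_le_ofReal Metric.diam_nonneg hvolS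
    have hRpos : 0 < R := lt_of_lt_of_le hℓpos hℓR
    have intS : ∀ {f : ℝ → ℝ}, Continuous f → IntegrableOn f S := fun hf =>
      (hf.integrableOn_Icc).mono_set hIcc
    have contQabs : Continuous fun t => Q (φ t) :=
      hQcont.comp_continuous contφ (fun t => Set.mem_Ici.2 (abs_nonneg _))
    set A : ℝ := ∫ t in S, φ t with hA
    set B : ℝ := ∫ t in S, Q (φ t) with hB
    have hA0 : 0 ≤ A := setIntegral_nonneg hSmeas fun _ _ => abs_nonneg _
    haveI : IsFiniteMeasure (volume.restrict S) :=
      ⟨by rw [Measure.restrict_apply_univ]; exact hvol_lt_top⟩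
    haveI : NeZero (volume.restrict S) :=
      ⟨fun h => hS0 (Measure.restrict_eq_zero.1 h)⟩
    have hfi : Integrable φ (volume.restrict S) := intS contφ
    have hgi0 : Integrable (fun t => Q (φ t)) (volume.restrict S) := intS contQabs
    have hgi : Integrable (Q ∘ φ) (volume.restrict S) := hgi0
    have hjen := hQconv.map_average_le (f := φ) hQcont isClosed_Ici
      (Filter.Eventually.of_forall fun t => Set.mem_Ici.2 (abs_nonneg (g' t)))
      hfi hgi
    rw [average_eq, average_eq, measureReal_restrict_apply_univ, smul_eq_mul,
      smul_eq_mul] at hjen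
    have hjen' : Q (ℓ⁻¹ * A) ≤ ℓ⁻¹ * B := hjen
    rw [← div_eq_inv_mul, ← div_eq_inv_mul] at hjen'
    have pointwise : ∀ t₀ ∈ S, Q (|u (z + t₀ • e)| / R) ≤ B / ℓ := by
      intro t₀ ht₀
      have h1 : |u (z + t₀ • e)| / R ≤ A / ℓ :=
        div_le_div₀ hA0 (key t₀ ht₀) hℓpos hℓR
      have h2 : Q (|u (z + t₀ • e)| / R) ≤ Q (A / ℓ) :=
        hQmono (Set.mem_Ici.2 (div_nonneg (abs_nonneg _) Metric.diam_nonneg))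
          (Set.mem_Ici.2 (div_nonneg hA0 hℓpos.le)) h1
      exact h2.trans hjen'
    have contLHS : Continuous fun t => Q (|u (z + t • e)| / R) :=
      hQcont.comp_continuous (((hu.continuous.comp contL).abs).div_const R)
        (fun t => Set.mem_Ici.2 (div_nonneg (abs_nonneg _) Metric.diam_nonneg))
    have contRHS : Continuous fun t : ℝ => Q ‖gradient u (z + t • e)‖ := by
      have h1 : Continuous fun t : ℝ => ‖gradient u (z + t • e)‖ := by
        have : (fun t : ℝ => ‖gradient u (z + t • e)‖)
            = fun t : ℝ => ‖fderiv ℝ u (z + t • e)‖ := funext fun t => hgradnorm _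
        rw [this]
        exact ((hu.continuous_fderiv one_ne_zero).comp contL).norm
      exact hQcont.comp_continuous h1 (fun t => Set.mem_Ici.2 (norm_nonneg _))
    have step1 : ∫ t in S, Q (|u (z + t • e)| / R) ≤ ∫ t in S, B / ℓ := by
      refine setIntegral_mono_on (intS contLHS) ?_ hSmeas pointwise
      exact integrableOn_const hvol_lt_top.ne
    have step2 : ∫ t in (S : Set ℝ), (B / ℓ : ℝ) = B := by
      rw [setIntegral_const, smul_eq_mul, measureReal_def, ← hℓ]
      field_simp
    have step3 : B ≤ ∫ t in S, Q ‖gradient u (z + t • e)‖ := by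
      refine setIntegral_mono_on (intS contQabs) (intS contRHS) hSmeas ?_
      intro t _
      refine hQmono (Set.mem_Ici.2 (abs_nonneg _)) (Set.mem_Ici.2 (norm_nonneg _)) ?_
      rw [hgradnorm]
      show ‖(fderiv ℝ u (z + t • e)) e‖ ≤ _
      calc ‖(fderiv ℝ u (z + t • e)) e‖ ≤ ‖fderiv ℝ u (z + t • e)‖ * ‖e‖ :=
            (fderiv ℝ u (z + t • e)).le_opNorm e
        _ = ‖fderiv ℝ u (z + t • e)‖ := by rw [he, mul_one]
    calc ∫ t in S, Q (|u (z + t • e)| / R) ≤ B := by rw [← step2]; exact step1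
      _ ≤ _ := step3

/-- Lieberman's lemma (Lemma 2.3 of the paper), stated for continuously
differentiable functions with compact support in `Ω`. -/
theorem stmt_10 (n : ℕ) (hn : 1 ≤ n)
    (Ω : Set (EuclideanSpace ℝ (Fin n))) (hΩopen : IsOpen Ω)
    (hΩbdd : Bornology.IsBounded Ω)
    (Q : ℝ → ℝ)
    (hQmono : MonotoneOn Q (Set.Ici 0))
    (hQconv : ConvexOn ℝ (Set.Ici 0) Q)
    (hQcont : ContinuousOn Q (Set.Ici 0))
    (hQ0 : Q 0 = 0)
    (hQslope : ∀ s t : ℝ, 0 < s → s ≤ t → Q s / s ≤ Q t / t)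
    (u : EuclideanSpace ℝ (Fin n) → ℝ)
    (hu : ContDiff ℝ 1 u) (husupp : HasCompactSupport u)
    (husuppΩ : tsupport u ⊆ Ω) :
    ∫ x in Ω, Q (|u x| / Metric.diam Ω) ≤ ∫ x in Ω, Q ‖gradient u x‖ := by
  obtain ⟨m, rfl⟩ : ∃ m, n = m + 1 := ⟨n - 1, (Nat.succ_pred_eq_of_pos hn).symm⟩
  set R := Metric.diam Ω with hRdef
  have hgradnorm : ∀ x, ‖gradient u x‖ = ‖fderiv ℝ u x‖ := fun x =>
    (InnerProductSpace.toDual ℝ _).symm.norm_map _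
  have hΩmeas : MeasurableSet Ω := hΩopen.measurableSet
  have contF : Continuous fun x : EuclideanSpace ℝ (Fin (m+1)) => Q (|u x| / R) :=
    hQcont.comp_continuous ((hu.continuous.abs).div_const R)
      (fun x => Set.mem_Ici.2 (div_nonneg (abs_nonneg _) Metric.diam_nonneg))
  have contG : Continuous fun x : EuclideanSpace ℝ (Fin (m+1)) => Q ‖gradient u x‖ := by
    have h1 : Continuous fun x : EuclideanSpace ℝ (Fin (m+1)) => ‖gradient u x‖ := by
      have : (fun x : EuclideanSpace ℝ (Fin (m+1)) => ‖gradient u x‖)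
          = fun x => ‖fderiv ℝ u x‖ := funext fun x => hgradnorm x
      rw [this]
      exact (hu.continuous_fderiv one_ne_zero).norm
    exact hQcont.comp_continuous h1 (fun x => Set.mem_Ici.2 (norm_nonneg _))
  have hclos : IsCompact (closure Ω) := hΩbdd.isCompact_closure
  have intF : IntegrableOn (fun x => Q (|u x| / R)) Ω :=
    (contF.locallyIntegrable.integrableOn_isCompact hclos).mono_set subset_closure
  have intG : IntegrableOn (fun x => Q ‖gradient u x‖) Ω :=
    (contG.locallyIntegrable.integrableOn_isCompact hclos).mono_set subset_closure
  have iF : Integrable (Ω.indicator fun x => Q (|u x| / R)) :=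
    intF.integrable_indicator hΩmeas
  have iG : Integrable (Ω.indicator fun x => Q ‖gradient u x‖) :=
    intG.integrable_indicator hΩmeas
  -- the measure preserving equivalence with ℝ × ℝ^m
  set ψ : EuclideanSpace ℝ (Fin (m+1)) ≃ᵐ (ℝ × (Fin m → ℝ)) :=
    (MeasurableEquiv.toLp 2 (Fin (m+1) → ℝ)).symm.trans
      (MeasurableEquiv.piFinSuccAbove (fun _ => ℝ) 0) with hψdef
  have hψmp : MeasurePreserving ψ volume volume := by
    have h1 := EuclideanSpace.volume_preserving_symm_measurableEquiv_toLp (Fin (m+1))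
    have h2 := MeasureTheory.volume_preserving_piFinSuccAbove (fun _ : Fin (m+1) => ℝ) 0
    exact h2.comp h1
  have hψsmp : MeasurePreserving ψ.symm volume volume := hψmp.symm
  have hemb : MeasurableEmbedding ψ.symm := ψ.symm.measurableEmbedding
  -- the direction of the line
  set e₀ : EuclideanSpace ℝ (Fin (m+1)) := EuclideanSpace.single 0 1 with he₀def
  have he₀ : ‖e₀‖ = 1 := by rw [he₀def, EuclideanSpace.norm_single]; norm_num
  have hsymm_eq : ∀ (t : ℝ) (y : Fin m → ℝ),
      ψ.symm (t, y) = ψ.symm (0, y) + t • e₀ := by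
    intro t y
    ext i
    have hcoord : ∀ (s : ℝ), (ψ.symm (s, y)) i = Fin.insertNth (α := fun _ => ℝ) 0 s y i := fun s => rfl
    have he₀i : e₀ i = if i = 0 then 1 else 0 := by
      rw [he₀def, EuclideanSpace.single_apply]
    have hadd : (ψ.symm (0, y) + t • e₀) i = (ψ.symm (0, y)) i + t * e₀ i := rfl
    rw [hcoord, hadd, hcoord, he₀i]
    refine Fin.cases ?_ (fun j => ?_) i
    · simp [Fin.insertNth_apply_same]
    · have h1 : Fin.insertNth (α := fun _ => ℝ) (0 : Fin (m+1)) t y j.succ = y j := by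
        have : (0 : Fin (m+1)).succAbove j = j.succ := Fin.zero_succAbove j
        rw [← this, Fin.insertNth_apply_succAbove]
      have h2 : Fin.insertNth (α := fun _ => ℝ) (0 : Fin (m+1)) (0:ℝ) y j.succ = y j := by
        have : (0 : Fin (m+1)).succAbove j = j.succ := Fin.zero_succAbove j
        rw [← this, Fin.insertNth_apply_succAbove]
      rw [h1, h2]
      simp [Fin.succ_ne_zero]
  -- transferred integrability
  have hiFcomp : Integrable
      (fun p : ℝ × (Fin m → ℝ) => (Ω.indicator fun x => Q (|u x| / R)) (ψ.symm p)) :=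
    (hψsmp.integrable_comp_emb hemb).2 iF
  have hiGcomp : Integrable
      (fun p : ℝ × (Fin m → ℝ) => (Ω.indicator fun x => Q ‖gradient u x‖) (ψ.symm p)) :=
    (hψsmp.integrable_comp_emb hemb).2 iG
  have keyInt : ∀ (H : EuclideanSpace ℝ (Fin (m+1)) → ℝ),
      Integrable (fun p : ℝ × (Fin m → ℝ) => (Ω.indicator H) (ψ.symm p)) →
      ∫ x in Ω, H x = ∫ y : Fin m → ℝ, ∫ t : ℝ, (Ω.indicator H) (ψ.symm (t, y)) := by
    intro H hint
    rw [← integral_indicator hΩmeas, ← hψsmp.integral_comp hemb (Ω.indicator H)]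
    rw [show (volume : Measure (ℝ × (Fin m → ℝ))) = Measure.prod volume volume from rfl]
      at hint ⊢
    exact integral_prod_symm _ hint
  rw [keyInt _ hiFcomp, keyInt _ hiGcomp]
  refine integral_mono ?_ ?_ ?_
  · rw [show (volume : Measure (ℝ × (Fin m → ℝ))) = Measure.prod volume volume from rfl]
      at hiFcomp
    exact hiFcomp.integral_prod_right
  · rw [show (volume : Measure (ℝ × (Fin m → ℝ))) = Measure.prod volume volume from rfl]
      at hiGcomp
    exact hiGcomp.integral_prod_right
  · intro y
    have hzline : ∀ (H : EuclideanSpace ℝ (Fin (m+1)) → ℝ),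
        ∫ t : ℝ, (Ω.indicator H) (ψ.symm (t, y))
          = ∫ t in {t : ℝ | ψ.symm (0, y) + t • e₀ ∈ Ω}, H (ψ.symm (0, y) + t • e₀) := by
      intro H
      have hSmeas : MeasurableSet {t : ℝ | ψ.symm (0, y) + t • e₀ ∈ Ω} :=
        (hΩopen.preimage (continuous_const.add (continuous_id.smul continuous_const))).measurableSet
      rw [← integral_indicator hSmeas]
      congr 1
      funext t
      rw [hsymm_eq t y]
      by_cases h : ψ.symm (0, y) + t • e₀ ∈ Ω <;>
        simp [Set.indicator_apply, h]
    show (∫ t : ℝ, (Ω.indicator fun x => Q (|u x| / R)) (ψ.symm (t, y)))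
        ≤ ∫ t : ℝ, (Ω.indicator fun x => Q ‖gradient u x‖) (ψ.symm (t, y))
    rw [hzline, hzline]
    exact line_est Ω hΩopen hΩbdd Q hQmono hQconv hQcont hQ0 u hu husupp husuppΩ
      (ψ.symm (0, y)) e₀ he₀
end
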